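/- Let L ≥ 1 be an integer, Z > 0 a real number, and Δ = 2Z/(2^L − 1). Let b₁,…,b_L ∈ {0,1} be fixed bits and let X₁,…,X_L be independent Bernoulli random variables with P(X_ν = 1) = ϱ for some ϱ ∈ [0,1]. Define the received bits B_ν = X_ν(1−b_ν) + (1−X_ν)b_ν and the decoded value Q° = −Z + Σ_{ν=1}^{L} B_ν 2^{ν−1} Δ. Then Var(Q°) = ϱ(1−ϱ) · 4Z²(2^{2L} − 1) / (3(2^L − 1)²). -/

import Mathlib

open MeasureTheory ProbabilityTheory

lemma variance_const_add_aux {Ω : Type*} [MeasurableSpace Ω] (μ : Measure Ω)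
    [IsProbabilityMeasure μ] (c : ℝ) (f : Ω → ℝ) (hf : MemLp f 2 μ) :
    variance (fun ω => c + f ω) μ = variance f μ := by
  have hcf : MemLp (fun ω => c + f ω) 2 μ := (memLp_const c).add hf
  rw [variance_eq_integral hcf.aemeasurable, variance_eq_integral hf.aemeasurable]
  have hint : (∫ ω, (c + f ω) ∂μ) = c + ∫ ω, f ω ∂μ := by
    rw [integral_add (integrable_const c) (hf.integrable one_le_two)]
    simp
  congr 1
  funext ω
  simp only [Pi.pow_apply, Pi.sub_apply, hint]
  ring

/-- Variance of the decoded output of a binary encoding-decoding scheme over a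
memoryless binary symmetric channel: if the bits `b ν ∈ {0,1}` are independently
flipped with crossover probability `ϱ`, yielding received bits
`B ν = X ν (1 - b ν) + (1 - X ν) b ν` and decoded value
`Q° = -Z + Σ_ν B ν 2^ν Δ` with `Δ = 2 Z / (2^L - 1)`, then
`Var(Q°) = ϱ (1 - ϱ) 4 Z² (2^{2L} - 1) / (3 (2^L - 1)²)`. -/
theorem decoded_output_variance
    {Ω : Type*} [MeasurableSpace Ω] (μ : Measure Ω) [IsProbabilityMeasure μ]
    (L : ℕ) (hL : 1 ≤ L) (Z : ℝ) (hZ : 0 < Z)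
    (Δ : ℝ) (hΔ : Δ = 2 * Z / (2 ^ L - 1))
    (b : Fin L → ℝ) (hb : ∀ ν, b ν = 0 ∨ b ν = 1)
    (ϱ : ℝ) (hϱ0 : 0 ≤ ϱ) (hϱ1 : ϱ ≤ 1)
    (X : Fin L → Ω → ℝ) (hXm : ∀ ν, Measurable (X ν))
    (hXval : ∀ ν ω, X ν ω = 0 ∨ X ν ω = 1)
    (hX1 : ∀ ν, μ {ω | X ν ω = 1} = ENNReal.ofReal ϱ)
    (hXindep : iIndepFun X μ)
    (B : Fin L → Ω → ℝ)
    (hB : ∀ ν ω, B ν ω = X ν ω * (1 - b ν) + (1 - X ν ω) * b ν) :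
    variance (fun ω => -Z + ∑ ν : Fin L, B ν ω * 2 ^ (ν : ℕ) * Δ) μ
      = ϱ * (1 - ϱ) * (4 * Z ^ 2 * (2 ^ (2 * L) - 1)) / (3 * (2 ^ L - 1) ^ 2) := by
  classical
  -- the scaled received bits
  set Y : Fin L → Ω → ℝ := fun ν ω => B ν ω * 2 ^ (ν : ℕ) * Δ with hY
  -- Y ν is a measurable function of X ν
  have hYcomp : ∀ ν, Y ν = (fun x : ℝ => (x * (1 - b ν) + (1 - x) * b ν) * 2 ^ (ν : ℕ) * Δ) ∘ X ν := by
    intro ν; funext ω; simp [hY, hB ν ω]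
  have hgm : ∀ ν : Fin L, Measurable (fun x : ℝ => (x * (1 - b ν) + (1 - x) * b ν) * 2 ^ (ν : ℕ) * Δ) := by
    intro ν; fun_prop
  -- independence of the Y's
  have hYindep : iIndepFun Y μ := by
    have := hXindep.comp _ hgm
    convert this using 1
    funext ν
    exact hYcomp ν
  -- each X ν is in L²
  have hXmem : ∀ ν, MemLp (X ν) 2 μ := by
    intro ν
    refine memLp_of_bounded (a := 0) (b := 1) (Filter.Eventually.of_forall fun ω => ?_)
      (hXm ν).aestronglyMeasurable 2
    rcases hXval ν ω with h | h <;> simp [h]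
  -- each B ν is in L²
  have hBmem : ∀ ν, MemLp (B ν) 2 μ := by
    intro ν
    have hBm : Measurable (B ν) := by
      have : B ν = (fun x : ℝ => x * (1 - b ν) + (1 - x) * b ν) ∘ X ν := by
        funext ω; simp [hB ν ω]
      rw [this]; exact (by fun_prop : Measurable fun x : ℝ => x * (1 - b ν) + (1 - x) * b ν).comp (hXm ν)
    refine memLp_of_bounded (a := 0) (b := 1) (Filter.Eventually.of_forall fun ω => ?_)
      hBm.aestronglyMeasurable 2
    rcases hXval ν ω with h | h <;> rcases hb ν with h' | h' <;>
      simp [hB ν ω, h, h']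
  have hYmem : ∀ ν, MemLp (Y ν) 2 μ := by
    intro ν
    have : Y ν = fun ω => (2 ^ (ν : ℕ) * Δ) * B ν ω := by
      funext ω; simp [hY]; ring
    rw [this]
    exact (hBmem ν).const_mul _
  -- variance of each X ν
  have hXvar : ∀ ν, variance (X ν) μ = ϱ * (1 - ϱ) := by
    intro ν
    have hind : X ν = Set.indicator {ω | X ν ω = 1} (fun _ => (1 : ℝ)) := by
      funext ω
      rcases hXval ν ω with h | h
      · rw [h, Set.indicator_of_notMem]
        simp [Set.mem_setOf_eq, h]
      · rw [h, Set.indicator_of_mem]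
        exact h
    have hmeas : MeasurableSet {ω | X ν ω = 1} := by
      have : {ω | X ν ω = 1} = X ν ⁻¹' {1} := rfl
      rw [this]; exact (hXm ν) (measurableSet_singleton 1)
    have hEX : (∫ ω, X ν ω ∂μ) = ϱ := by
      rw [show (fun ω => X ν ω) = Set.indicator {ω | X ν ω = 1} (fun _ => (1 : ℝ)) from hind]
      rw [integral_indicator_const _ hmeas, measureReal_def, hX1 ν, ENNReal.toReal_ofReal hϱ0]
      simp
    have hsq : (X ν) ^ 2 = X ν := by
      funext ω
      rcases hXval ν ω with h | h <;> simp [h]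
    rw [variance_eq_sub (hXmem ν)]
    rw [hsq]
    simp only [hEX]
    ring
  -- variance of each B ν equals variance of X ν
  have hBvar : ∀ ν, variance (B ν) μ = ϱ * (1 - ϱ) := by
    intro ν
    rcases hb ν with h | h
    · have : B ν = X ν := by funext ω; rw [hB ν ω, h]; ring
      rw [this]; exact hXvar ν
    · have : B ν = fun ω => 1 + (-1) * X ν ω := by
        funext ω; rw [hB ν ω, h]; ring
      rw [this, variance_const_add_aux μ 1 _ ((hXmem ν).const_mul (-1)), variance_const_mul]
      rw [hXvar ν]; norm_num
  have hYvar : ∀ ν : Fin L, variance (Y ν) μ = (2 ^ (ν : ℕ) * Δ) ^ 2 * (ϱ * (1 - ϱ)) := by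
    intro ν
    have : Y ν = fun ω => (2 ^ (ν : ℕ) * Δ) * B ν ω := by
      funext ω; simp [hY]; ring
    rw [this, variance_const_mul, hBvar ν]
  -- reduce to the variance of the sum
  have hsum : variance (fun ω => -Z + ∑ ν : Fin L, B ν ω * 2 ^ (ν : ℕ) * Δ) μ
      = variance (∑ ν : Fin L, Y ν) μ := by
    have h1 : (fun ω => -Z + ∑ ν : Fin L, B ν ω * 2 ^ (ν : ℕ) * Δ)
        = fun ω => -Z + (∑ ν : Fin L, Y ν) ω := by
      funext ω; simp [hY, Finset.sum_apply]
    rw [h1, variance_const_add_aux μ (-Z) _ (memLp_finset_sum' _ fun ν _ => hYmem ν)]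
  rw [hsum, IndepFun.variance_sum (fun ν _ => hYmem ν)
    (fun i _ j _ hij => hYindep.indepFun hij)]
  simp only [hYvar]
  -- geometric sum computation
  have hgeom : ∑ ν : Fin L, ((2:ℝ) ^ (ν : ℕ) * Δ) ^ 2 * (ϱ * (1 - ϱ))
      = ϱ * (1 - ϱ) * Δ ^ 2 * ((4 ^ L - 1) / 3) := by
    have h4 : ∑ ν : Fin L, (4:ℝ) ^ (ν : ℕ) = (4 ^ L - 1) / 3 := by
      rw [Fin.sum_univ_eq_sum_range (fun i => (4:ℝ) ^ i)]
      rw [geom_sum_eq (by norm_num) L]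
      norm_num
    calc ∑ ν : Fin L, ((2:ℝ) ^ (ν : ℕ) * Δ) ^ 2 * (ϱ * (1 - ϱ))
        = ∑ ν : Fin L, (ϱ * (1 - ϱ) * Δ ^ 2) * (4:ℝ) ^ (ν : ℕ) := by
          apply Finset.sum_congr rfl
          intro ν _
          rw [show (4:ℝ) ^ (ν:ℕ) = ((2:ℝ)^(ν:ℕ))^2 by rw [show (4:ℝ) = 2^2 by norm_num, ← pow_mul, ← pow_mul, mul_comm]]
          ring
      _ = (ϱ * (1 - ϱ) * Δ ^ 2) * ∑ ν : Fin L, (4:ℝ) ^ (ν : ℕ) := by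
          rw [Finset.mul_sum]
      _ = ϱ * (1 - ϱ) * Δ ^ 2 * ((4 ^ L - 1) / 3) := by rw [h4]
  rw [hgeom, hΔ]
  have h2L : (2:ℝ) ^ L - 1 ≠ 0 := by
    have : (2:ℝ) ^ L ≥ 2 ^ 1 := by
      apply pow_le_pow_right₀ (by norm_num) hL
    simp at this
    nlinarith
  have h4L : (2:ℝ) ^ (2 * L) = 4 ^ L := by
    rw [pow_mul]; norm_num
  rw [h4L]
  field_simp
  ring
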